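/- The special linear group SL(2,3) of 2×2 matrices of determinant 1 over the field with 3 elements is not a Cayley integral group. -/

import Mathlib

open scoped Classical

/-- The adjacency matrix of the undirected Cayley graph `Cay(G,S)`:
the `(a,b)` entry is `1` if `a * b⁻¹ ∈ S` and `0` otherwise. -/
noncomputable def cayleyAdjMatrix {G : Type*} [Group G] [Fintype G] (S : Set G) :
    Matrix G G ℝ :=
  Matrix.of fun a b => if a * b⁻¹ ∈ S then (1 : ℝ) else 0

/-- A finite group `G` is *Cayley integral* if for every subset `S ⊆ G` with `1 ∉ S` and
`S = S⁻¹`, every eigenvalue of the adjacency matrix of the Cayley graph `Cay(G,S)`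
is an integer. -/
def IsCayleyIntegral (G : Type*) [Group G] [Fintype G] : Prop :=
  ∀ S : Set G, (1 : G) ∉ S → (∀ s ∈ S, s⁻¹ ∈ S) →
    ∀ μ ∈ spectrum ℝ (cayleyAdjMatrix S), ∃ k : ℤ, μ = (k : ℝ)

abbrev SL23 := Matrix.SpecialLinearGroup (Fin 2) (ZMod 3)

instance sl23DecEq : DecidableEq SL23 := fun a b =>
  @decidable_of_iff _ (∀ i j, a.val i j = b.val i j)
    ⟨fun h => Subtype.ext (by ext i j; exact h i j), fun h i j => by rw [h]⟩
    (@Nat.decidableForallFin 2 _ fun i => @Nat.decidableForallFin 2 _ fun j => ZMod.decidableEq 3 _ _)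

def mk23 (a b c d : ZMod 3) (h : a*d - b*c = 1 := by decide) : SL23 :=
  ⟨!![a,b;c,d], by simp [Matrix.det_fin_two_of]; linear_combination h⟩

def sFin : Finset SL23 := {mk23 0 1 2 1, mk23 0 1 2 2, mk23 1 2 1 0, mk23 2 2 1 0}

def Wz (g : SL23) : ℤ :=
  if g.val 0 0 = 0 then (if g.val 0 1 = 1 then -1 else 1) else 0

def Fz (g : SL23) : ℤ :=
  if g.val 0 0 = 1 then (if g.val 1 0 = 0 ∧ g.val 1 1 = 1 then -2 else 1)
  else if g.val 0 0 = 2 then (if g.val 1 0 = 0 ∧ g.val 1 1 = 2 then 2 else -1)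
  else 0

def AZ : Matrix SL23 SL23 ℤ :=
  Matrix.of fun a b => if a * b⁻¹ ∈ sFin then 1 else 0

set_option maxRecDepth 40000 in
lemma hF : ∀ g : SL23, (AZ.mulVec Fz) g = 6 * Wz g := by decide

set_option maxRecDepth 40000 in
lemma hW : ∀ g : SL23, (AZ.mulVec Wz) g = Fz g := by decide

noncomputable def vEig : SL23 → ℝ := fun g => (Fz g : ℝ) + Real.sqrt 6 * (Wz g : ℝ)

lemma cast_entry (a b : SL23) :
    cayleyAdjMatrix (↑sFin : Set SL23) a b = ((AZ a b : ℤ) : ℝ) := by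
  simp only [cayleyAdjMatrix, AZ, Matrix.of_apply, Finset.mem_coe]
  split_ifs <;> simp

lemma hmv (x : SL23 → ℤ) (g : SL23) :
    (cayleyAdjMatrix (↑sFin : Set SL23)).mulVec (fun h => (x h : ℝ)) g
      = ((AZ.mulVec x) g : ℝ) := by
  simp only [Matrix.mulVec, dotProduct, cast_entry]
  push_cast
  rfl

lemma key : (cayleyAdjMatrix (↑sFin : Set SL23)).mulVec vEig = Real.sqrt 6 • vEig := by
  have hveq : vEig = (fun h => ((Fz h : ℤ) : ℝ)) + Real.sqrt 6 • (fun h => ((Wz h : ℤ) : ℝ)) := by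
    funext h; simp [vEig]
  funext g
  rw [hveq, Matrix.mulVec_add, Matrix.mulVec_smul]
  simp only [Pi.add_apply, Pi.smul_apply, smul_eq_mul]
  rw [hmv Fz g, hmv Wz g, hF g, hW g]
  have h6 : Real.sqrt 6 * Real.sqrt 6 = 6 := Real.mul_self_sqrt (by norm_num)
  push_cast
  linear_combination (-(Wz g : ℝ)) * h6

lemma vEig_ne_zero : vEig ≠ 0 := by
  intro h
  have h0 := congrFun h (mk23 0 1 2 0)
  have e1 : Fz (mk23 0 1 2 0) = 0 := by decide
  have e2 : Wz (mk23 0 1 2 0) = -1 := by decide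
  simp only [vEig, e1, e2, Pi.zero_apply] at h0
  push_cast at h0
  have h6 : (0:ℝ) < Real.sqrt 6 := Real.sqrt_pos.mpr (by norm_num)
  linarith

lemma sqrt6_mem : Real.sqrt 6 ∈ spectrum ℝ (cayleyAdjMatrix (↑sFin : Set SL23)) := by
  rw [← AlgEquiv.spectrum_eq (Matrix.toLinAlgEquiv' : Matrix SL23 SL23 ℝ ≃ₐ[ℝ] _),
    ← Module.End.hasEigenvalue_iff_mem_spectrum]
  apply Module.End.hasEigenvalue_of_hasEigenvector (x := vEig)
  refine ⟨Module.End.mem_eigenspace_iff.mpr ?_, vEig_ne_zero⟩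
  rw [Matrix.toLinAlgEquiv'_apply, key]

lemma not_square6 : ¬ IsSquare (6 : ℕ) := by
  rintro ⟨r, hr⟩
  rcases le_or_gt r 2 with h | h
  · nlinarith
  · nlinarith

/-- `SL(2,3)` is not Cayley integral. -/
theorem sl23_not_cayley_integral :
    ¬ IsCayleyIntegral (Matrix.SpecialLinearGroup (Fin 2) (ZMod 3)) := by
  intro h
  obtain ⟨k, hk⟩ := h (↑sFin : Set SL23)
    (by simpa using (by decide : (1 : SL23) ∉ sFin))
    (by intro s hs; simpa using (by decide : ∀ s ∈ sFin, s⁻¹ ∈ sFin) s (by simpa using hs))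
    (Real.sqrt 6)
    (by rw [show (fun a b => Classical.propDecidable (a = b) : DecidableEq SL23) = sl23DecEq
          from Subsingleton.elim _ _]
        exact sqrt6_mem)
  have hirr : Irrational (Real.sqrt 6) := by
    have : ((6 : ℕ) : ℝ) = (6 : ℝ) := by norm_num
    rw [← this]
    exact irrational_sqrt_natCast_iff.mpr not_square6
  exact hirr.ne_int k hk
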